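/- For every n ≥ 5, h_n ≠ 0. -/
import Mathlib


def t (n : ℕ) : ℤ := (-1) ^ ((Nat.digits 2 n).sum)

def h : ℕ → ℤ
  | 0 => 0
  | 1 => 1
  | (n + 2) => t (n + 2) * h (n + 1) + h n

lemma h_rec (n : ℕ) : h (n + 2) = t (n + 2) * h (n + 1) + h n := rfl

lemma t_pm (n : ℕ) : t n = 1 ∨ t n = -1 := neg_one_pow_eq_or ℤ _

lemma t_ne_zero (n : ℕ) : t n ≠ 0 := by
  rcases t_pm n with h | h <;> rw [h] <;> norm_num

lemma t_sq (n : ℕ) : t n * t n = 1 := by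
  rcases t_pm n with h | h <;> rw [h] <;> norm_num

lemma t_zero : t 0 = 1 := by simp [t]

lemma t_even (n : ℕ) : t (2 * n) = t n := by
  rcases Nat.eq_zero_or_pos n with rfl | hn
  · norm_num
  · unfold t
    rw [Nat.digits_def' (by norm_num : (1:ℕ) < 2) (by omega)]
    have h1 : (2 * n) % 2 = 0 := by omega
    have h2 : (2 * n) / 2 = n := by omega
    rw [h1, h2, List.sum_cons, zero_add]

lemma t_odd (n : ℕ) : t (2 * n + 1) = - t n := by
  unfold t
  rw [Nat.digits_def' (by norm_num : (1:ℕ) < 2) (by omega)]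
  have h1 : (2 * n + 1) % 2 = 1 := by omega
  have h2 : (2 * n + 1) / 2 = n := by omega
  rw [h1, h2, List.sum_cons, pow_add, pow_one]
  ring

lemma lemA (n : ℕ) : h (2 * n + 3) = t (2 * n + 3) * h (2 * n) := by
  have e1 : h (2 * n + 3) = t (2 * n + 3) * h (2 * n + 2) + h (2 * n + 1) := h_rec (2 * n + 1)
  have e2 : h (2 * n + 2) = t (2 * n + 2) * h (2 * n + 1) + h (2 * n) := h_rec (2 * n)
  have t3 : t (2 * n + 3) = - t (n + 1) := by
    have := t_odd (n + 1); rwa [show 2 * (n + 1) + 1 = 2 * n + 3 from by ring] at this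
  have t2 : t (2 * n + 2) = t (n + 1) := by
    have := t_even (n + 1); rwa [show 2 * (n + 1) = 2 * n + 2 from by ring] at this
  have sq := t_sq (n + 1)
  rw [e2] at e1
  rw [t3, t2] at e1
  rw [t3]
  linear_combination e1 - h (2 * n + 1) * sq

lemma lemB (n : ℕ) : h (2 * n + 4) = h (2 * n + 2) - t (n + 2) * t (n + 1) * h (2 * n) := by
  have e1 : h (2 * n + 4) = t (2 * n + 4) * h (2 * n + 3) + h (2 * n + 2) := h_rec (2 * n + 2)
  have e2 := lemA n
  have t3 : t (2 * n + 3) = - t (n + 1) := by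
    have := t_odd (n + 1); rwa [show 2 * (n + 1) + 1 = 2 * n + 3 from by ring] at this
  have t4 : t (2 * n + 4) = t (n + 2) := by
    have := t_even (n + 2); rwa [show 2 * (n + 2) = 2 * n + 4 from by ring] at this
  rw [e2, t3, t4] at e1
  linarith [e1]

lemma main (m : ℕ) (hm : 1 ≤ m) :
    h (4 * m) < 0 ∧ h (4 * m + 2) < 0 ∧ 3 * h (4 * m + 2) ≤ 5 * h (4 * m) ∧
      7 * h (4 * m) ≤ 2 * h (4 * m + 2) ∧
      (t m * t (m - 1) = -1 → h (4 * m + 2) ≤ 2 * h (4 * m)) := by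
  induction m, hm using Nat.le_induction with
  | base =>
    have h0 : h 0 = 0 := rfl
    have h1 : h 1 = 1 := rfl
    have t1 : t 1 = -1 := by have := t_odd 0; rw [t_zero] at this; simpa using this
    have t2 : t 2 = t 1 := by simpa using t_even 1
    have t3 : t 3 = - t 1 := by simpa using t_odd 1
    have t4 : t 4 = t 2 := by simpa using t_even 2
    have t5 : t 5 = - t 2 := by simpa using t_odd 2
    have t6 : t 6 = t 3 := by simpa using t_even 3
    have h2 : h 2 = -1 := by rw [h_rec 0, h0, h1, t2, t1]; ring
    have h3 : h 3 = 0 := by rw [h_rec 1, h1, h2, t3, t1]; ring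
    have h4 : h 4 = -1 := by rw [h_rec 2, h2, h3, t4, t2, t1]; ring
    have h5 : h 5 = -1 := by rw [h_rec 3, h3, h4, t5, t2, t1]; ring
    have h6 : h 6 = -2 := by rw [h_rec 4, h4, h5, t6, t3, t1]; ring
    norm_num [h4, h6, t1, t_zero]
  | succ m hm ih =>
    obtain ⟨ha, hb, hr1, hr2, hcond⟩ := ih
    -- new values
    have eA : h (4 * m + 4) = h (4 * m + 2) - t (2 * m + 2) * t (2 * m + 1) * h (4 * m) := by
      have := lemB (2 * m)
      rwa [show 2 * (2 * m) + 4 = 4 * m + 4 from by ring,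
        show 2 * (2 * m) + 2 = 4 * m + 2 from by ring,
        show 2 * (2 * m) = 4 * m from by ring,
        show 2 * m + 2 = 2 * m + 2 from rfl] at this
    have eB : h (4 * m + 6) = h (4 * m + 4) - t (2 * m + 3) * t (2 * m + 2) * h (4 * m + 2) := by
      have := lemB (2 * m + 1)
      rwa [show 2 * (2 * m + 1) + 4 = 4 * m + 6 from by ring,
        show 2 * (2 * m + 1) + 2 = 4 * m + 4 from by ring,
        show 2 * (2 * m + 1) = 4 * m + 2 from by ring] at this
    have t2m2 : t (2 * m + 2) = t (m + 1) := by
      have := t_even (m + 1); rwa [show 2 * (m + 1) = 2 * m + 2 from by ring] at this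
    have t2m1 : t (2 * m + 1) = - t m := t_odd m
    have t2m3 : t (2 * m + 3) = - t (m + 1) := by
      have := t_odd (m + 1); rwa [show 2 * (m + 1) + 1 = 2 * m + 3 from by ring] at this
    have sq1 := t_sq (m + 1)
    -- h(4m+4) = b + c*a  where c = t(m+1)*t(m)
    have ea' : h (4 * m + 4) = h (4 * m + 2) + (t (m + 1) * t m) * h (4 * m) := by
      rw [eA, t2m2, t2m1]; ring
    have eb' : h (4 * m + 6) = h (4 * m + 4) + h (4 * m + 2) := by
      rw [eB, t2m3, t2m2]; linear_combination h (4 * m + 2) * sq1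
    rw [show 4 * (m + 1) + 2 = 4 * m + 6 from by ring, show 4 * (m + 1) = 4 * m + 4 from by ring,
      Nat.add_sub_cancel]
    -- determine c
    rcases Nat.even_or_odd m with ⟨k, hk⟩ | ⟨k, hk⟩
    · -- m even, m = 2k, so c = t(2k+1)*t(2k) = -1
      have hk1 : 1 ≤ k := by omega
      have hc : t (m + 1) * t m = -1 := by
        rw [show m + 1 = 2 * k + 1 from by omega, show m = 2 * k from by omega,
          t_odd, t_even]
        linear_combination - t_sq k
      rw [hc] at ea'
      refine ⟨by linarith, by linarith, by linarith, by linarith, fun _ => by linarith⟩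
    · -- m odd, m = 2k+1
      have hceq : t (m + 1) * t m = - (t (k + 1) * t k) := by
        rw [show m + 1 = 2 * (k + 1) from by omega, show m = 2 * k + 1 from by omega,
          t_even, t_odd]
        ring
      have hcm : t m * t (m - 1) = -1 := by
        rw [show m = 2 * k + 1 from by omega, show 2 * k + 1 - 1 = 2 * k from by omega,
          t_odd, t_even]
        linear_combination - t_sq k
      have hb2a := hcond hcm
      rcases t_pm (k + 1) with hk1 | hk1 <;> rcases t_pm k with hk2 | hk2
      all_goals (
        first
        | (have hc : t (m + 1) * t m = -1 := by rw [hceq, hk1, hk2]; ring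
           rw [hc] at ea'
           exact ⟨by linarith, by linarith, by linarith, by linarith, fun _ => by linarith⟩)
        | (have hc : t (m + 1) * t m = 1 := by rw [hceq, hk1, hk2]; ring
           rw [hc] at ea'
           refine ⟨by linarith, by linarith, by linarith, by linarith, fun hcc => ?_⟩
           rw [hc] at hcc
           norm_num at hcc))

lemma h_even_neg (k : ℕ) (hk : 1 ≤ k) : h (2 * k) < 0 := by
  rcases Nat.even_or_odd k with ⟨j, hj⟩ | ⟨j, hj⟩
  · -- k = 2j, j ≥ 1
    have hj1 : 1 ≤ j := by omega
    have := (main j hj1).1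
    rwa [show 2 * k = 4 * j from by omega]
  · -- k = 2j+1
    rcases Nat.eq_zero_or_pos j with rfl | hj1
    · -- k = 1 : h 2 = -1
      have t1 : t 1 = -1 := by have := t_odd 0; rw [t_zero] at this; simpa using this
      have t2 : t 2 = t 1 := by simpa using t_even 1
      have h2 : h 2 = -1 := by
        rw [h_rec 0, t2, t1, show h 1 = 1 from rfl, show h 0 = 0 from rfl]; ring
      rw [show 2 * k = 2 from by omega, h2]
      norm_num
    · have := (main j hj1).2.1
      rwa [show 2 * k = 4 * j + 2 from by omega]

theorem stmt4 : ∀ n : ℕ, 5 ≤ n → h n ≠ 0 := by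
  intro n hn
  rcases Nat.even_or_odd n with ⟨k, hk⟩ | ⟨k, hk⟩
  · have : h (2 * k) < 0 := h_even_neg k (by omega)
    rw [show n = 2 * k from by omega]
    exact ne_of_lt this
  · obtain ⟨j, hj⟩ : ∃ j, k = j + 1 := ⟨k - 1, by omega⟩
    have hA := lemA j
    have hneg : h (2 * j) < 0 := h_even_neg j (by omega)
    rw [show n = 2 * j + 3 from by omega, hA]
    exact mul_ne_zero (t_ne_zero _) (ne_of_lt hneg)
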